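/- Let I = {1,...,n}, and for each i ∈ I let λ_i > 0 with Σ_{i∈I} λ_i = 1 and let A_i be a real N × N matrix that is both monotone (⟨x, A_i x⟩ ≥ 0 for all x ∈ ℝᴺ) and orthogonal (A_iᵀ A_i = I). Then each A_i satisfies det A_i = 1; the matrices A_i + I are invertible; the matrix Σ_{i∈I} λ_i (A_i + I)⁻¹ is invertible; and the resolvent average R(A, λ) = (Σ_{i∈I} λ_i (A_i + I)⁻¹)⁻¹ − I is monotone and orthogonal with det R(A, λ) = 1. -/
import Mathlib


open Matrix


variable {N : ℕ}

lemma myDotTrans (M : Matrix (Fin N) (Fin N) ℝ) (x : Fin N → ℝ) :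
    x ⬝ᵥ Mᵀ *ᵥ x = x ⬝ᵥ M *ᵥ x := by
  rw [Matrix.dotProduct_mulVec, Matrix.vecMul_transpose, dotProduct_comm]

lemma myKerUnit (M : Matrix (Fin N) (Fin N) ℝ) (h : ∀ v, M *ᵥ v = 0 → v = 0) :
    IsUnit M := by
  rw [Matrix.isUnit_iff_isUnit_det, isUnit_iff_ne_zero]
  intro h0
  obtain ⟨v, hv, hv0⟩ := Matrix.exists_mulVec_eq_zero_iff.mpr h0
  exact hv (h v hv0)

lemma myMonoUnit (M : Matrix (Fin N) (Fin N) ℝ)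
    (hm : ∀ x, 0 ≤ x ⬝ᵥ M *ᵥ x) : IsUnit (M + 1) := by
  apply myKerUnit
  intro v hv
  have h1 : v ⬝ᵥ (M + 1) *ᵥ v = v ⬝ᵥ M *ᵥ v + v ⬝ᵥ v := by
    rw [Matrix.add_mulVec, Matrix.one_mulVec, dotProduct_add]
  rw [hv, dotProduct_zero] at h1
  have h2 := hm v
  have h3 : 0 ≤ v ⬝ᵥ v := Finset.sum_nonneg fun i _ => mul_self_nonneg _
  rw [← dotProduct_self_eq_zero (v := v)]
  linarith

lemma myDetOne (M : Matrix (Fin N) (Fin N) ℝ) (horth : Mᵀ * M = 1)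
    (hu : IsUnit (M + 1)) : M.det = 1 := by
  have h : Mᵀ * (M + 1) = (M + 1)ᵀ := by
    rw [mul_add, horth, mul_one, Matrix.transpose_add, Matrix.transpose_one, add_comm]
  have hd := congrArg Matrix.det h
  rw [Matrix.det_mul, Matrix.det_transpose, Matrix.det_transpose] at hd
  have hdu : (M + 1).det ≠ 0 := ((Matrix.isUnit_iff_isUnit_det _).mp hu).ne_zero
  have := mul_right_cancel₀ hdu (hd.trans (one_mul _).symm)
  exact this

lemma myResolvent (M : Matrix (Fin N) (Fin N) ℝ) (horth : Mᵀ * M = 1)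
    (hu : IsUnit (M + 1)) : (M + 1)⁻¹ + ((M + 1)⁻¹)ᵀ = 1 := by
  have hud : IsUnit (M + 1).det := (Matrix.isUnit_iff_isUnit_det _).mp hu
  have hAAt : M * Mᵀ = 1 := mul_eq_one_comm.mp horth
  have hT : (M + 1)ᵀ = Mᵀ * (M + 1) := by
    rw [mul_add, horth, mul_one, Matrix.transpose_add, Matrix.transpose_one, add_comm]
  have hTi : ((M + 1)⁻¹)ᵀ = (M + 1)⁻¹ * M := by
    rw [Matrix.transpose_nonsing_inv, hT, Matrix.mul_inv_rev,
      Matrix.inv_eq_right_inv horth]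
  rw [hTi, ← mul_one ((M+1)⁻¹), mul_assoc, one_mul, ← mul_add, add_comm (1 : Matrix (Fin N) (Fin N) ℝ) M]
  exact Matrix.nonsing_inv_mul _ hud

lemma mySumMulVec {ι : Type*} (s : Finset ι) (M : ι → Matrix (Fin N) (Fin N) ℝ)
    (v : Fin N → ℝ) : (∑ i ∈ s, M i) *ᵥ v = ∑ i ∈ s, M i *ᵥ v := by
  funext j
  simp only [Matrix.mulVec, dotProduct, Finset.sum_apply, Matrix.sum_apply, Finset.sum_mul]
  rw [Finset.sum_comm]


/-- If each `Aᵢ` is a monotone orthogonal real `N × N` matrix, then `det Aᵢ = 1`,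
`Aᵢ + I` is invertible, `Σᵢ λᵢ(Aᵢ + I)⁻¹` is invertible, and the resolvent
average `R(A, λ) = (Σᵢ λᵢ(Aᵢ + I)⁻¹)⁻¹ − I` is monotone and orthogonal with
determinant `1`. -/
theorem stmt19 {N n : ℕ} (hn : 0 < n) (lam : Fin n → ℝ) (hpos : ∀ i, 0 < lam i)
    (hsum : ∑ i, lam i = 1) (A : Fin n → Matrix (Fin N) (Fin N) ℝ)
    (hmono : ∀ i, ∀ x : Fin N → ℝ, 0 ≤ x ⬝ᵥ (A i).mulVec x)
    (horth : ∀ i, (A i)ᵀ * A i = 1) :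
    (∀ i, (A i).det = 1) ∧
    (∀ i, IsUnit (A i + 1)) ∧
    IsUnit (∑ i, lam i • (A i + 1)⁻¹) ∧
    (∀ x : Fin N → ℝ,
      0 ≤ x ⬝ᵥ ((∑ i, lam i • (A i + 1)⁻¹)⁻¹ - 1).mulVec x) ∧
    ((∑ i, lam i • (A i + 1)⁻¹)⁻¹ - 1)ᵀ * ((∑ i, lam i • (A i + 1)⁻¹)⁻¹ - 1) = 1 ∧
    ((∑ i, lam i • (A i + 1)⁻¹)⁻¹ - 1).det = 1 := by
  have hu : ∀ i, IsUnit (A i + 1) := fun i => myMonoUnit _ (hmono i)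
  have hud : ∀ i, IsUnit (A i + 1).det := fun i => (Matrix.isUnit_iff_isUnit_det _).mp (hu i)
  have hdet : ∀ i, (A i).det = 1 := fun i => myDetOne _ (horth i) (hu i)
  set B : Matrix (Fin N) (Fin N) ℝ := ∑ i, lam i • (A i + 1)⁻¹ with hBdef
  have hBsym : B + Bᵀ = 1 := by
    rw [hBdef, Matrix.transpose_sum, ← Finset.sum_add_distrib]
    have h : ∀ i ∈ Finset.univ, lam i • (A i + 1)⁻¹ + (lam i • (A i + 1)⁻¹)ᵀ
        = lam i • (1 : Matrix (Fin N) (Fin N) ℝ) := by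
      intro i _
      rw [Matrix.transpose_smul, ← smul_add, myResolvent _ (horth i) (hu i)]
    rw [Finset.sum_congr rfl h, ← Finset.sum_smul, hsum, one_smul]
  have hBtrans : ∀ v : Fin N → ℝ, v ⬝ᵥ B *ᵥ v + v ⬝ᵥ B *ᵥ v = v ⬝ᵥ v := by
    intro v
    have h1 : v ⬝ᵥ (B + Bᵀ) *ᵥ v = v ⬝ᵥ v := by rw [hBsym, Matrix.one_mulVec]
    rw [Matrix.add_mulVec, dotProduct_add, myDotTrans] at h1
    exact h1
  have hBunit : IsUnit B := by
    apply myKerUnit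
    intro v hv
    have h2 := hBtrans v
    rw [hv, dotProduct_zero] at h2
    rw [← dotProduct_self_eq_zero (v := v)]
    linarith
  have hBd : IsUnit B.det := (Matrix.isUnit_iff_isUnit_det _).mp hBunit
  have hBC : B * B⁻¹ = 1 := Matrix.mul_nonsing_inv _ hBd
  have hCB : B⁻¹ * B = 1 := Matrix.nonsing_inv_mul _ hBd
  have hclaim : (B⁻¹)ᵀ * B⁻¹ = (B⁻¹)ᵀ + B⁻¹ := by
    have h1 : (B⁻¹)ᵀ * (B + Bᵀ) * B⁻¹ = (B⁻¹)ᵀ * B⁻¹ := by rw [hBsym, mul_one]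
    calc (B⁻¹)ᵀ * B⁻¹ = (B⁻¹)ᵀ * (B + Bᵀ) * B⁻¹ := h1.symm
      _ = (B⁻¹)ᵀ * (B * B⁻¹) + ((B⁻¹)ᵀ * Bᵀ) * B⁻¹ := by noncomm_ring
      _ = (B⁻¹)ᵀ + B⁻¹ := by
          rw [hBC, mul_one, ← Matrix.transpose_mul, hBC, Matrix.transpose_one, one_mul]
  have horthR : (B⁻¹ - 1)ᵀ * (B⁻¹ - 1) = 1 := by
    have h2 : (B⁻¹ - 1)ᵀ * (B⁻¹ - 1) = (B⁻¹)ᵀ * B⁻¹ - (B⁻¹)ᵀ - B⁻¹ + 1 := by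
      rw [Matrix.transpose_sub, Matrix.transpose_one]; noncomm_ring
    rw [h2, hclaim]; abel
  have hmonoR : ∀ x : Fin N → ℝ, 0 ≤ x ⬝ᵥ (B⁻¹ - 1) *ᵥ x := by
    intro x
    set L := (WithLp.linearEquiv 2 ℝ (Fin N → ℝ)).symm with hL
    have hnf : ∀ v : Fin N → ℝ, ‖L v‖ ^ 2 = v ⬝ᵥ v := by
      intro v
      rw [EuclideanSpace.norm_eq, Real.sq_sqrt (by positivity)]
      simp only [dotProduct]
      exact Finset.sum_congr rfl fun i _ => by
        rw [Real.norm_eq_abs, sq_abs, pow_two]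
        rfl
    set y := B⁻¹ *ᵥ x with hy
    have hx : B *ᵥ y = x := by rw [hy, Matrix.mulVec_mulVec, hBC, Matrix.one_mulVec]
    have h0 : x ⬝ᵥ y + x ⬝ᵥ y = y ⬝ᵥ y := by
      have h3 := hBtrans y
      rw [hx, dotProduct_comm y x] at h3
      exact h3
    set z : Fin n → Fin N → ℝ := fun i => (A i + 1)⁻¹ *ᵥ y with hz
    have hxz : x = ∑ i, lam i • z i := by
      rw [← hx, hBdef, mySumMulVec]
      exact Finset.sum_congr rfl fun i _ => Matrix.smul_mulVec _ _ _
    have hzb : ∀ i, z i ⬝ᵥ z i ≤ (1/2) * (y ⬝ᵥ y) := by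
      intro i
      have hyz : (A i + 1) *ᵥ z i = y := by
        show (A i + 1) *ᵥ ((A i + 1)⁻¹ *ᵥ y) = y
        rw [Matrix.mulVec_mulVec, Matrix.mul_nonsing_inv _ (hud i), Matrix.one_mulVec]
      have hnormA : (A i *ᵥ z i) ⬝ᵥ (A i *ᵥ z i) = z i ⬝ᵥ z i := by
        rw [Matrix.dotProduct_mulVec, ← Matrix.mulVec_transpose, Matrix.mulVec_mulVec,
          horth i, Matrix.one_mulVec]
      have hexp : y ⬝ᵥ y = (A i *ᵥ z i) ⬝ᵥ (A i *ᵥ z i) + z i ⬝ᵥ (A i *ᵥ z i)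
          + ((A i *ᵥ z i) ⬝ᵥ z i + z i ⬝ᵥ z i) := by
        rw [← hyz, Matrix.add_mulVec, Matrix.one_mulVec, dotProduct_add,
          add_dotProduct, add_dotProduct]
      have hcross : 0 ≤ z i ⬝ᵥ (A i *ᵥ z i) := hmono i _
      have hcross2 : (A i *ᵥ z i) ⬝ᵥ z i = z i ⬝ᵥ (A i *ᵥ z i) :=
        dotProduct_comm _ _
      linarith [hexp, hnormA]
    have hyy : 0 ≤ y ⬝ᵥ y := Finset.sum_nonneg fun i _ => mul_self_nonneg _
    have hc0 : 0 ≤ (1/2) * (y ⬝ᵥ y) := by linarith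
    set c := Real.sqrt ((1/2) * (y ⬝ᵥ y)) with hcdef
    have hzc : ∀ i, ‖L (z i)‖ ≤ c := by
      intro i
      rw [hcdef, ← Real.sqrt_sq (norm_nonneg (L (z i)))]
      exact Real.sqrt_le_sqrt (by rw [hnf]; exact hzb i)
    have hxc : ‖L x‖ ≤ c :=
      calc ‖L x‖ = ‖∑ i, lam i • L (z i)‖ := by
            rw [hxz, map_sum]
            congr 1
        _ ≤ ∑ i, ‖lam i • L (z i)‖ := norm_sum_le _ _
        _ ≤ ∑ i, lam i * c := Finset.sum_le_sum (fun i _ => by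
              rw [norm_smul, Real.norm_eq_abs, abs_of_pos (hpos i)]
              exact mul_le_mul_of_nonneg_left (hzc i) (hpos i).le)
        _ = c := by rw [← Finset.sum_mul, hsum, one_mul]
    have hxx : x ⬝ᵥ x ≤ (1/2) * (y ⬝ᵥ y) := by
      rw [← hnf x, ← Real.sq_sqrt hc0, ← hcdef]
      exact pow_le_pow_left₀ (norm_nonneg _) hxc 2
    have hgoal : x ⬝ᵥ (B⁻¹ - 1) *ᵥ x = x ⬝ᵥ y - x ⬝ᵥ x := by
      rw [Matrix.sub_mulVec, Matrix.one_mulVec, dotProduct_sub, ← hy]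
    rw [hgoal]
    linarith
  refine ⟨hdet, hu, hBunit, hmonoR, horthR, ?_⟩
  apply myDetOne _ horthR
  have h4 : B⁻¹ - 1 + 1 = B⁻¹ := sub_add_cancel _ _
  rw [h4]
  exact Matrix.isUnit_nonsing_inv_iff.mpr hBunit
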